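/- arXiv:1202.5440 — 8 statements merged into one kernel-verified Lean document; each statement's English description precedes it below -/
import Mathlib

section
/- Let b : ℕ → ℝ be nonnegative with b(0)=0, λ₁ > 0, R > 0, and suppose λ₁ Σ_{j=1}^∞ b(j) R^j < ∞. Define z by z(0)=1, z(n) = λ₁ Σ_{j=0}^{n-1} b(n-j) z(j) for n ≥ 1. Then Σ_{j=0}^∞ z(j) R^j < ∞ if and only if λ₁ Σ_{j=1}^∞ b(j) R^j < 1. -/
open Finset

theorem stmt1 (b z : ℕ → ℝ) (lam R : ℝ) (hb : ∀ n, 0 ≤ b n) (hb0 : b 0 = 0)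
    (hlam : 0 < lam) (hR : 0 < R)
    (hbsum : Summable (fun j => b j * R ^ j))
    (hz0 : z 0 = 1)
    (hz : ∀ n, 1 ≤ n → z n = lam * ∑ j ∈ Finset.range n, b (n - j) * z j) :
    Summable (fun j => z j * R ^ j) ↔ lam * ∑' j, b j * R ^ j < 1 := by
  set c : ℕ → ℝ := fun k => lam * (b k * R ^ k) with hcdef
  set w : ℕ → ℝ := fun n => z n * R ^ n with hwdef
  have hc0 : c 0 = 0 := by simp [hcdef, hb0]
  have hcnn : ∀ k, 0 ≤ c k := fun k =>
    mul_nonneg hlam.le (mul_nonneg (hb k) (pow_nonneg hR.le k))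
  have hcsum : Summable c := hbsum.mul_left lam
  have hcB : ∑' k, c k = lam * ∑' j, b j * R ^ j := tsum_mul_left
  set B : ℝ := lam * ∑' j, b j * R ^ j with hBdef
  have hBnn : 0 ≤ B := by
    rw [← hcB]; exact tsum_nonneg hcnn
  have hznn : ∀ n, 0 ≤ z n := by
    intro n
    induction n using Nat.strong_induction_on with
    | _ n ih =>
      rcases Nat.eq_zero_or_pos n with h | h
      · simp [h, hz0]
      · rw [hz n h]
        exact mul_nonneg hlam.le (Finset.sum_nonneg fun j hj =>
          mul_nonneg (hb _) (ih j (Finset.mem_range.mp hj)))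
  have hwnn : ∀ n, 0 ≤ w n := fun n => mul_nonneg (hznn n) (pow_nonneg hR.le n)
  have hw0 : w 0 = 1 := by simp [hwdef, hz0]
  have hwrec : ∀ m, 1 ≤ m → w m = ∑ j ∈ range m, c (m - j) * w j := by
    intro m hm
    have key : ∀ j ∈ range m, c (m - j) * w j = lam * (b (m - j) * z j) * R ^ m := by
      intro j hj
      have hjm : j < m := mem_range.mp hj
      have hpow : R ^ (m - j) * R ^ j = R ^ m := by
        rw [← pow_add, Nat.sub_add_cancel hjm.le]
      calc c (m - j) * w j = lam * (b (m - j) * z j) * (R ^ (m - j) * R ^ j) := by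
            simp only [hcdef, hwdef]; ring
        _ = lam * (b (m - j) * z j) * R ^ m := by rw [hpow]
    rw [Finset.sum_congr rfl key, ← Finset.sum_mul]
    simp only [hwdef]
    rw [hz m hm, Finset.mul_sum]
  -- partial sums of c are at most B
  have hpartial : ∀ s : Finset ℕ, ∑ k ∈ s, c k ≤ B := by
    intro s
    rw [← hcB]
    exact Summable.sum_le_tsum s (fun k _ => hcnn k) hcsum
  constructor
  · -- forward
    intro hS
    set S : ℝ := ∑' n, w n with hSdef
    have hS1 : (1 : ℝ) ≤ S := by
      rw [← hw0]
      exact Summable.le_tsum hS 0 (fun j _ => hwnn j)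
    have hSpos : 0 < S := lt_of_lt_of_le one_pos hS1
    set F : ℕ → ℝ := fun n => ∑ k ∈ range (n + 1), c k * w (n - k) with hFdef
    have hF0 : F 0 = 0 := by simp [hFdef, hc0]
    have hFw : ∀ n, F (n + 1) = w (n + 1) := by
      intro n
      have hm : 1 ≤ n + 1 := Nat.succ_le_succ (Nat.zero_le n)
      rw [hwrec (n + 1) hm]
      simp only [hFdef]
      rw [Finset.sum_range_succ']
      have h1 : c 0 * w (n + 1 - 0) = 0 := by rw [hc0]; ring
      rw [h1, add_zero]
      rw [← Finset.sum_range_reflect (fun j => c (n + 1 - j) * w j) (n + 1)]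
      apply Finset.sum_congr rfl
      intro i hi
      have hii : i < n + 1 := mem_range.mp hi
      have e1 : n + 1 - (n + 1 - 1 - i) = i + 1 := by omega
      have e2 : n + 1 - 1 - i = n - i := by omega
      have e3 : n + 1 - (i + 1) = n - i := by omega
      rw [e1, e2, e3]
    have hFle : ∀ n, F n ≤ w n := by
      intro n
      cases n with
      | zero => rw [hF0, hw0]; exact zero_le_one
      | succ n => rw [hFw n]
    have hFnn : ∀ n, 0 ≤ F n := fun n =>
      Finset.sum_nonneg fun k _ => mul_nonneg (hcnn k) (hwnn _)
    have hFsum : Summable F := Summable.of_nonneg_of_le hFnn hFle hS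
    have hcauchy : (∑' k, c k) * S = ∑' n, F n := by
      apply tsum_mul_tsum_eq_tsum_sum_range_of_summable_norm
      · simpa [Real.norm_of_nonneg, abs_of_nonneg (hcnn _)] using hcsum
      · simpa [abs_of_nonneg (hwnn _)] using hS
    have hSsplit : S = 1 + ∑' n, w (n + 1) := by
      rw [hSdef, Summable.tsum_eq_zero_add hS, hw0]
    have hFsplit : ∑' n, F n = ∑' n, w (n + 1) := by
      rw [Summable.tsum_eq_zero_add hFsum, hF0, zero_add]
      exact tsum_congr hFw
    have hBS : B * S = S - 1 := by
      rw [← hcB] at hBdef ⊢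
      rw [hcauchy, hFsplit]
      linarith [hSsplit]
    have : B * S < 1 * S := by
      rw [hBS, one_mul]; linarith
    exact lt_of_mul_lt_mul_right this hSpos.le
  · -- converse
    intro hB
    have h1B : 0 < 1 - B := by linarith
    apply summable_of_sum_range_le (c := (1 - B)⁻¹) hwnn
    intro N
    cases N with
    | zero =>
      simp only [Finset.range_zero, Finset.sum_empty]
      exact inv_nonneg.mpr h1B.le
    | succ M =>
      set W : ℝ := ∑ n ∈ range (M + 1), w n with hWdef
      have hWnn : 0 ≤ W := Finset.sum_nonneg fun n _ => hwnn n
      -- W = 1 + ∑_{n<M} w (n+1)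
      have hWsplit : W = 1 + ∑ n ∈ range M, w (n + 1) := by
        rw [hWdef, Finset.sum_range_succ', hw0, add_comm]
      -- pad each w (n+1) to a sum over range (M+1)
      have hpad : ∀ n ∈ range M, w (n + 1) = ∑ j ∈ range (M + 1), c (n + 1 - j) * w j := by
        intro n hn
        have hnM : n < M := mem_range.mp hn
        rw [hwrec (n + 1) (Nat.succ_le_succ (Nat.zero_le n))]
        apply Finset.sum_subset
        · intro x hx
          rw [mem_range] at hx ⊢
          omega
        · intro x _ hx
          rw [mem_range, not_lt] at hx
          have : n + 1 - x = 0 := by omega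
          rw [this, hc0, zero_mul]
      have hinner : ∀ j, ∑ n ∈ range M, c (n + 1 - j) ≤ B := by
        intro j
        rcases le_or_gt M j with h | h
        · have : ∀ n ∈ range M, c (n + 1 - j) = 0 := by
            intro n hn
            have : n + 1 - j = 0 := by have := mem_range.mp hn; omega
            rw [this, hc0]
          rw [Finset.sum_eq_zero this]
          exact hBnn
        · -- split range M at j
          have hsplit : ∑ n ∈ range M, c (n + 1 - j)
              = ∑ n ∈ range j, c (n + 1 - j) + ∑ n ∈ Ico j M, c (n + 1 - j) := by
            rw [Finset.range_eq_Ico, Finset.range_eq_Ico]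
            exact (Finset.sum_Ico_consecutive (fun n => c (n + 1 - j)) (Nat.zero_le j) h.le).symm
          have hz1 : ∑ n ∈ range j, c (n + 1 - j) = 0 := by
            apply Finset.sum_eq_zero
            intro n hn
            have : n + 1 - j = 0 := by have := mem_range.mp hn; omega
            rw [this, hc0]
          have hz2 : ∑ n ∈ Ico j M, c (n + 1 - j) = ∑ i ∈ range (M - j), c (i + 1) := by
            rw [Finset.sum_Ico_eq_sum_range]
            apply Finset.sum_congr rfl
            intro i _
            congr 1
            omega
          have hz3 : ∑ i ∈ range (M - j), c (i + 1) = ∑ i ∈ range (M - j + 1), c i := by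
            rw [Finset.sum_range_succ', hc0, add_zero]
          rw [hsplit, hz1, hz2, hz3, zero_add]
          exact hpartial _
      have hbound : ∑ n ∈ range M, w (n + 1) ≤ B * W := by
        calc ∑ n ∈ range M, w (n + 1)
            = ∑ n ∈ range M, ∑ j ∈ range (M + 1), c (n + 1 - j) * w j :=
              Finset.sum_congr rfl hpad
          _ = ∑ j ∈ range (M + 1), (∑ n ∈ range M, c (n + 1 - j)) * w j := by
              rw [Finset.sum_comm]
              exact Finset.sum_congr rfl fun j _ => (Finset.sum_mul _ _ _).symm
          _ ≤ ∑ j ∈ range (M + 1), B * w j := by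
              apply Finset.sum_le_sum
              intro j _
              exact mul_le_mul_of_nonneg_right (hinner j) (hwnn j)
          _ = B * W := by rw [hWdef, Finset.mul_sum]
      have hWle : W ≤ 1 + B * W := by
        nth_rewrite 1 [hWsplit]
        linarith [hbound]
      have : W * (1 - B) ≤ 1 := by nlinarith
      calc W ≤ 1 / (1 - B) := by rw [le_div_iff₀ h1B]; linarith
        _ = (1 - B)⁻¹ := one_div _
end

section
/- Let b : ℕ → ℝ be nonnegative with b(0)=0, λ₁ > 0 with λ₁ Σ_{j=1}^∞ b(j) < 1, and let z solve z(0)=1, z(n) = λ₁ Σ_{j=0}^{n-1} b(n-j) z(j). If z² is summable (Σ z(j)² < ∞), then Σ_{j=1}^∞ z(j)² ≤ 1/(1 − λ₁² B²) − 1, where B = Σ_{j=1}^∞ b(j). -/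
private lemma cs_aux (s : Finset ℕ) (f g : ℕ → ℝ) (hf : ∀ i, 0 ≤ f i) :
    (∑ i ∈ s, f i * g i) ^ 2 ≤ (∑ i ∈ s, f i) * (∑ i ∈ s, f i * g i ^ 2) := by
  have h := Finset.sum_mul_sq_le_sq_mul_sq s (fun i => Real.sqrt (f i))
    (fun i => Real.sqrt (f i) * g i)
  have h1 : ∀ i, Real.sqrt (f i) * (Real.sqrt (f i) * g i) = f i * g i := by
    intro i; rw [← mul_assoc, Real.mul_self_sqrt (hf i)]
  have h2 : ∀ i, Real.sqrt (f i) ^ 2 = f i := fun i => Real.sq_sqrt (hf i)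
  have h3 : ∀ i, (Real.sqrt (f i) * g i) ^ 2 = f i * g i ^ 2 := by
    intro i; rw [mul_pow, h2]
  simpa [h1, h2, h3] using h

theorem stmt2 (b z : ℕ → ℝ) (lam : ℝ) (hb : ∀ n, 0 ≤ b n) (hb0 : b 0 = 0)
    (hlam : 0 < lam) (hbsum : Summable b) (hlt : lam * ∑' j, b j < 1)
    (hz0 : z 0 = 1)
    (hz : ∀ n, 1 ≤ n → z n = lam * ∑ j ∈ Finset.range n, b (n - j) * z j)
    (hz2 : Summable (fun j => (z j) ^ 2)) :
    ∑' j, (z (j + 1)) ^ 2 ≤ 1 / (1 - lam ^ 2 * (∑' j, b j) ^ 2) - 1 := by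
  set B := ∑' j, b j with hB
  have hB0 : 0 ≤ B := tsum_nonneg hb
  have hlamB : 0 ≤ lam * B := by positivity
  have hq1 : lam ^ 2 * B ^ 2 < 1 := by nlinarith
  have h1q : 0 < 1 - lam ^ 2 * B ^ 2 := by linarith
  have hbshift : Summable (fun k => b (k + 1)) := (summable_nat_add_iff 1).mpr hbsum
  have hBshift : ∑' k, b (k + 1) = B := by
    have h := Summable.tsum_eq_zero_add hbsum
    rw [hb0] at h
    rw [hB, h, zero_add]
  have hpartial : ∀ m, ∑ k ∈ Finset.range m, b (k + 1) ≤ B := by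
    intro m
    calc ∑ k ∈ Finset.range m, b (k + 1) ≤ ∑' k, b (k + 1) :=
          Summable.sum_le_tsum _ (fun i _ => hb _) hbshift
      _ = B := hBshift
  have hzshift : Summable (fun j => z (j + 1) ^ 2) := (summable_nat_add_iff 1).mpr hz2
  set S := ∑' j, z (j + 1) ^ 2 with hS
  have hS0 : 0 ≤ S := tsum_nonneg (fun _ => sq_nonneg _)
  have hZsum : ∑' j, z j ^ 2 = 1 + S := by
    have h := Summable.tsum_eq_zero_add hz2
    rw [hz0] at h; simpa using h
  -- partial sums of b (n+1-j) over j < n+1 are ≤ B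
  have hbpart : ∀ n : ℕ, ∑ j ∈ Finset.range (n + 1), b (n + 1 - j) ≤ B := by
    intro n
    have hre : ∑ j ∈ Finset.range (n + 1), b (n + 1 - j)
        = ∑ j ∈ Finset.range (n + 1), b (j + 1) := by
      rw [← Finset.sum_range_reflect (fun j => b (j + 1)) (n + 1)]
      apply Finset.sum_congr rfl
      intro j hj
      rw [Finset.mem_range] at hj
      congr 1
      omega
    rw [hre]; exact hpartial _
  -- pointwise Cauchy–Schwarz bound
  have hpt : ∀ n, z (n + 1) ^ 2
      ≤ lam ^ 2 * B * ∑ j ∈ Finset.range (n + 1), b (n + 1 - j) * z j ^ 2 := by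
    intro n
    have hrec := hz (n + 1) (by omega)
    have hcs := cs_aux (Finset.range (n + 1)) (fun j => b (n + 1 - j)) z
      (fun j => hb _)
    have hnn : 0 ≤ ∑ j ∈ Finset.range (n + 1), b (n + 1 - j) * z j ^ 2 :=
      Finset.sum_nonneg (fun j _ => mul_nonneg (hb _) (sq_nonneg _))
    have hb1 := hbpart n
    calc z (n + 1) ^ 2
        = lam ^ 2 * (∑ j ∈ Finset.range (n + 1), b (n + 1 - j) * z j) ^ 2 := by
          rw [hrec, mul_pow]
      _ ≤ lam ^ 2 * ((∑ j ∈ Finset.range (n + 1), b (n + 1 - j))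
            * ∑ j ∈ Finset.range (n + 1), b (n + 1 - j) * z j ^ 2) := by
          have := sq_nonneg lam
          exact mul_le_mul_of_nonneg_left hcs (sq_nonneg lam)
      _ ≤ lam ^ 2 * B * ∑ j ∈ Finset.range (n + 1), b (n + 1 - j) * z j ^ 2 := by
          rw [mul_assoc]
          apply mul_le_mul_of_nonneg_left _ (sq_nonneg lam)
          exact mul_le_mul_of_nonneg_right hb1 hnn
  -- main partial-sum estimate
  have key : S ≤ lam ^ 2 * B ^ 2 * (1 + S) := by
    apply Summable.tsum_le_of_sum_range_le hzshift
    intro N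
    have hswap : ∑ n ∈ Finset.range N, ∑ j ∈ Finset.range (n + 1), b (n + 1 - j) * z j ^ 2
        = ∑ j ∈ Finset.range N, ∑ n ∈ Finset.Ico j N, b (n + 1 - j) * z j ^ 2 := by
      simp only [Finset.range_eq_Ico]
      exact (Finset.sum_Ico_Ico_comm 0 N (fun i j => b (j + 1 - i) * z i ^ 2)).symm
    have hinner : ∀ j ∈ Finset.range N,
        ∑ n ∈ Finset.Ico j N, b (n + 1 - j) * z j ^ 2 ≤ B * z j ^ 2 := by
      intro j hj
      have : ∑ n ∈ Finset.Ico j N, b (n + 1 - j) * z j ^ 2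
          = (∑ n ∈ Finset.Ico j N, b (n + 1 - j)) * z j ^ 2 := by
        rw [Finset.sum_mul]
      rw [this]
      apply mul_le_mul_of_nonneg_right _ (sq_nonneg _)
      have := Finset.sum_Ico_eq_sum_range (f := fun n => b (n + 1 - j)) (m := j) (n := N)
      rw [this]
      have : ∑ k ∈ Finset.range (N - j), b (j + k + 1 - j) = ∑ k ∈ Finset.range (N - j), b (k + 1) := by
        apply Finset.sum_congr rfl; intro k _; congr 1; omega
      rw [this]; exact hpartial _
    have hzpart : ∑ j ∈ Finset.range N, z j ^ 2 ≤ 1 + S := by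
      rw [← hZsum]
      exact Summable.sum_le_tsum _ (fun i _ => sq_nonneg _) hz2
    calc ∑ n ∈ Finset.range N, z (n + 1) ^ 2
        ≤ ∑ n ∈ Finset.range N, lam ^ 2 * B
            * ∑ j ∈ Finset.range (n + 1), b (n + 1 - j) * z j ^ 2 :=
          Finset.sum_le_sum (fun n _ => hpt n)
      _ = lam ^ 2 * B * ∑ n ∈ Finset.range N, ∑ j ∈ Finset.range (n + 1),
            b (n + 1 - j) * z j ^ 2 := by rw [Finset.mul_sum]
      _ = lam ^ 2 * B * ∑ j ∈ Finset.range N, ∑ n ∈ Finset.Ico j N,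
            b (n + 1 - j) * z j ^ 2 := by rw [hswap]
      _ ≤ lam ^ 2 * B * ∑ j ∈ Finset.range N, B * z j ^ 2 := by
          apply mul_le_mul_of_nonneg_left _ (by positivity)
          exact Finset.sum_le_sum hinner
      _ = lam ^ 2 * B * (B * ∑ j ∈ Finset.range N, z j ^ 2) := by
          rw [← Finset.mul_sum]
      _ ≤ lam ^ 2 * B * (B * (1 + S)) := by
          apply mul_le_mul_of_nonneg_left _ (by positivity)
          exact mul_le_mul_of_nonneg_left hzpart hB0
      _ = lam ^ 2 * B ^ 2 * (1 + S) := by ring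
  have hfin : S * (1 - lam ^ 2 * B ^ 2) ≤ lam ^ 2 * B ^ 2 := by nlinarith
  have : S ≤ lam ^ 2 * B ^ 2 / (1 - lam ^ 2 * B ^ 2) := (le_div_iff₀ h1q).mpr hfin
  have heq : lam ^ 2 * B ^ 2 / (1 - lam ^ 2 * B ^ 2) = 1 / (1 - lam ^ 2 * B ^ 2) - 1 := by
    field_simp
    ring
  linarith [this, heq.le, heq.ge]
end

section
/- Let b : ℕ → ℝ be nonnegative with b(0)=0, λ₁ > 0, B = Σ_{j=1}^∞ b(j), with λ₁ B < 1, and let z solve z(0)=1, z(n) = λ₁ Σ_{j=0}^{n-1} b(n-j) z(j). If z² is summable, then Σ_{n=1}^∞ z(n)² ≤ (λ₁² / (1 − λ₁ B)²) · Σ_{j=1}^∞ b(j)². -/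
open Finset

lemma swapL (f g : ℕ → ℝ) (hf : ∀ k, 0 ≤ f k) (hfs : Summable f) (hg : ∀ j, 0 ≤ g j) (N : ℕ) :
    ∑ n ∈ range N, ∑ j ∈ range n, f (n - j) * g j ≤ (∑' k, f k) * ∑ j ∈ range N, g j := by
  have h1 : ∑ n ∈ range N, ∑ j ∈ range n, f (n - j) * g j
      = ∑ j ∈ range N, ∑ n ∈ Ico (j+1) N, f (n - j) * g j := by
    simp only [← Nat.Ico_zero_eq_range]; rw [← Finset.sum_Ico_Ico_comm' 0 N (fun j n => f (n - j) * g j)]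
  rw [h1, mul_comm, sum_mul]
  apply Finset.sum_le_sum
  intro j _
  have h2 : ∑ n ∈ Ico (j+1) N, f (n - j) * g j = g j * ∑ n ∈ Ico (j+1) N, f (n - j) := by
    rw [mul_comm, sum_mul]
  rw [h2]
  apply mul_le_mul_of_nonneg_left _ (hg j)
  rw [Finset.sum_Ico_eq_sum_range]
  calc ∑ i ∈ range (N - (j+1)), f (j + 1 + i - j)
      = ∑ i ∈ range (N - (j+1)), f (i + 1) := by
        refine Finset.sum_congr rfl fun i _ => ?_
        congr 1; omega
    _ = ∑ k ∈ Ico 1 (N - (j+1) + 1), f k := by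
        rw [Finset.sum_Ico_eq_sum_range]
        simp [add_comm]
    _ ≤ ∑' k, f k := Summable.sum_le_tsum _ (fun i _ => hf i) hfs

theorem stmt3 (b z : ℕ → ℝ) (lam : ℝ) (hb : ∀ n, 0 ≤ b n) (hb0 : b 0 = 0)
    (hlam : 0 < lam) (hbsum : Summable b) (hb2sum : Summable (fun j => (b j) ^ 2))
    (hlt : lam * ∑' j, b j < 1)
    (hz0 : z 0 = 1)
    (hz : ∀ n, 1 ≤ n → z n = lam * ∑ j ∈ Finset.range n, b (n - j) * z j)
    (hz2 : Summable (fun j => (z j) ^ 2)) :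
    ∑' n, (z (n + 1)) ^ 2 ≤ lam ^ 2 / (1 - lam * ∑' j, b j) ^ 2 * ∑' j, (b j) ^ 2 := by
  set B := ∑' j, b j with hB
  have hBnn : 0 ≤ B := tsum_nonneg hb
  have hden : 0 < 1 - lam * B := by linarith
  set S : ℝ := 1 / (1 - lam * B) with hS
  have hSpos : 0 < S := by positivity
  have hznn : ∀ n, 0 ≤ z n := by
    intro n
    induction n using Nat.strong_induction_on with
    | _ n ih =>
      rcases Nat.eq_zero_or_pos n with h | h
      · simp [h, hz0]
      · rw [hz n h]
        apply mul_nonneg hlam.le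
        apply Finset.sum_nonneg
        intro j hj
        exact mul_nonneg (hb _) (ih j (Finset.mem_range.mp hj))
  have hT : ∀ N, ∑ n ∈ range N, z n ≤ S := by
    intro N
    have hD : ∑ n ∈ range N, z n ≤ 1 + lam * ∑ n ∈ range N, ∑ j ∈ range n, b (n - j) * z j := by
      rcases Nat.eq_zero_or_pos N with h | h
      · subst h
        simp
      · obtain ⟨M, rfl⟩ := Nat.exists_eq_succ_of_ne_zero h.ne'
        rw [Finset.sum_range_succ' (fun n => z n) M, hz0]
        have hr : ∑ n ∈ range (M+1), ∑ j ∈ range n, b (n - j) * z j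
            = ∑ i ∈ range M, ∑ j ∈ range (i+1), b (i + 1 - j) * z j := by
          rw [Finset.sum_range_succ' (fun n => ∑ j ∈ range n, b (n - j) * z j) M]
          simp
        rw [hr, Finset.mul_sum]
        have h5 : ∑ i ∈ range M, z (i+1)
            ≤ ∑ i ∈ range M, lam * ∑ j ∈ range (i+1), b (i + 1 - j) * z j :=
          Finset.sum_le_sum (fun i _ => le_of_eq (hz (i+1) (by omega)))
        linarith
    have hL := swapL b z hb hbsum hznn N
    have hthis : ∑ n ∈ range N, z n ≤ 1 + lam * (B * ∑ n ∈ range N, z n) := by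
      calc ∑ n ∈ range N, z n ≤ 1 + lam * ∑ n ∈ range N, ∑ j ∈ range n, b (n - j) * z j := hD
        _ ≤ 1 + lam * (B * ∑ n ∈ range N, z n) := by gcongr
    rw [hS, le_div_iff₀ hden]
    ring_nf
    ring_nf at hthis
    linarith
  have hzsum : Summable z := summable_of_sum_range_le hznn hT
  have key : ∀ n, z (n+1) ^ 2 ≤ lam ^ 2 * S * ∑ j ∈ range (n+1), b (n + 1 - j) ^ 2 * z j := by
    intro n
    rw [hz (n+1) (by omega), mul_pow]
    have hcs : (∑ j ∈ range (n+1), b (n + 1 - j) * z j) ^ 2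
        ≤ (∑ j ∈ range (n+1), z j) * ∑ j ∈ range (n+1), b (n + 1 - j) ^ 2 * z j := by
      have hh := Finset.sum_mul_sq_le_sq_mul_sq (range (n+1))
        (fun j => Real.sqrt (z j)) (fun j => b (n + 1 - j) * Real.sqrt (z j))
      have e1 : ∀ j ∈ range (n+1), Real.sqrt (z j) * (b (n + 1 - j) * Real.sqrt (z j))
          = b (n + 1 - j) * z j := by
        intro j _
        rw [show Real.sqrt (z j) * (b (n + 1 - j) * Real.sqrt (z j))
            = b (n + 1 - j) * (Real.sqrt (z j) * Real.sqrt (z j)) by ring,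
          Real.mul_self_sqrt (hznn j)]
      have e2 : ∀ j ∈ range (n+1), Real.sqrt (z j) ^ 2 = z j := by
        intro j _; exact Real.sq_sqrt (hznn j)
      have e3 : ∀ j ∈ range (n+1), (b (n + 1 - j) * Real.sqrt (z j)) ^ 2
          = b (n + 1 - j) ^ 2 * z j := by
        intro j _; rw [mul_pow, Real.sq_sqrt (hznn j)]
      rwa [Finset.sum_congr rfl e1, Finset.sum_congr rfl e2, Finset.sum_congr rfl e3] at hh
    have hCnn : 0 ≤ ∑ j ∈ range (n+1), b (n + 1 - j) ^ 2 * z j :=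
      Finset.sum_nonneg fun j _ => mul_nonneg (sq_nonneg _) (hznn j)
    calc lam ^ 2 * (∑ j ∈ range (n+1), b (n + 1 - j) * z j) ^ 2
        ≤ lam ^ 2 * ((∑ j ∈ range (n+1), z j) * ∑ j ∈ range (n+1), b (n + 1 - j) ^ 2 * z j) :=
          mul_le_mul_of_nonneg_left hcs (sq_nonneg lam)
      _ ≤ lam ^ 2 * (S * ∑ j ∈ range (n+1), b (n + 1 - j) ^ 2 * z j) := by
          apply mul_le_mul_of_nonneg_left _ (sq_nonneg lam)
          exact mul_le_mul_of_nonneg_right (hT (n+1)) hCnn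
      _ = lam ^ 2 * S * ∑ j ∈ range (n+1), b (n + 1 - j) ^ 2 * z j := by ring
  have hzshift : Summable (fun n => z (n+1) ^ 2) := (summable_nat_add_iff 1).mpr hz2
  have final : ∀ N, ∑ n ∈ range N, z (n+1) ^ 2 ≤ lam ^ 2 * S * (S * ∑' j, (b j)^2) := by
    intro N
    calc ∑ n ∈ range N, z (n+1) ^ 2
        ≤ ∑ n ∈ range N, lam ^ 2 * S * ∑ j ∈ range (n+1), b (n + 1 - j) ^ 2 * z j :=
          Finset.sum_le_sum fun n _ => key n
      _ = lam ^ 2 * S * ∑ n ∈ range N, ∑ j ∈ range (n+1), b (n + 1 - j) ^ 2 * z j := by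
          rw [Finset.mul_sum]
      _ ≤ lam ^ 2 * S * (S * ∑' j, (b j)^2) := by
          apply mul_le_mul_of_nonneg_left _ (by positivity)
          have hswap := swapL (fun k => b k ^ 2) z (fun k => sq_nonneg _) hb2sum hznn (N+1)
          have e : ∑ n ∈ range N, ∑ j ∈ range (n+1), b (n + 1 - j) ^ 2 * z j
              = ∑ m ∈ range (N+1), ∑ j ∈ range m, b (m - j) ^ 2 * z j := by
            rw [Finset.sum_range_succ' (fun m => ∑ j ∈ range m, b (m - j) ^ 2 * z j) N]
            simp
          rw [e]
          calc ∑ m ∈ range (N+1), ∑ j ∈ range m, b (m - j) ^ 2 * z j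
              ≤ (∑' k, b k ^ 2) * ∑ j ∈ range (N+1), z j := hswap
            _ ≤ (∑' k, b k ^ 2) * S :=
                mul_le_mul_of_nonneg_left (hT (N+1)) (tsum_nonneg fun k => sq_nonneg _)
            _ = S * ∑' j, (b j) ^ 2 := by ring
  have hfin : ∑' n, z (n+1) ^ 2 ≤ lam ^ 2 * S * (S * ∑' j, (b j)^2) :=
    Summable.tsum_le_of_sum_range_le hzshift final
  calc ∑' n, z (n+1) ^ 2 ≤ lam ^ 2 * S * (S * ∑' j, (b j)^2) := hfin
    _ = lam ^ 2 / (1 - lam * B) ^ 2 * ∑' j, (b j) ^ 2 := by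
        rw [hS]
        simp only [div_eq_mul_inv, one_div, ← inv_pow]
        ring
end

section
/- Let z : ℕ → ℝ be nonnegative with Σ_{j=0}^∞ z(j) r^{-j} < ∞ for some r ∈ (0,1), z(n) > 0 for all n, and suppose lim_{n→∞} z(n+1)/z(n) = r. Then with χ_z(k) = Σ_{j=0}^∞ z(j) z(k+j), one has lim_{k→∞} χ_z(k)/z(k) = Σ_{j=0}^∞ z(j) r^j. -/
open Filter

theorem stmt5 (z : ℕ → ℝ) (r : ℝ) (hr : r ∈ Set.Ioo (0 : ℝ) 1)
    (hz : ∀ n, 0 < z n)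
    (hsum : Summable (fun j => z j * (r⁻¹) ^ j))
    (hlim : Filter.Tendsto (fun n => z (n + 1) / z n) Filter.atTop (nhds r)) :
    Filter.Tendsto (fun k => (∑' j, z j * z (k + j)) / z k) Filter.atTop
      (nhds (∑' j, z j * r ^ j)) := by
  obtain ⟨hr0, hr1⟩ := hr
  set ρ : ℝ := (r + 1) / 2 with hρ
  have hrρ : r < ρ := by rw [hρ]; linarith
  have hρ1 : ρ < 1 := by rw [hρ]; linarith
  have hρ0 : 0 < ρ := by rw [hρ]; linarith
  -- summable z
  have hzsum : Summable z := by
    apply hsum.of_nonneg_of_le (fun n => (hz n).le)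
    intro n
    have : (1:ℝ) ≤ (r⁻¹) ^ n := one_le_pow₀ (by
      rw [le_inv_comm₀ one_pos hr0]; simpa using hr1.le)
    nlinarith [(hz n).le]
  -- dominating bound summable
  have hgsum : Summable (fun j => z j * ρ ^ j) := by
    apply hzsum.of_nonneg_of_le
    · intro n; exact mul_nonneg (hz n).le (pow_nonneg hρ0.le n)
    · intro n
      have : ρ ^ n ≤ 1 := pow_le_one₀ hρ0.le hρ1.le
      nlinarith [(hz n).le]
  -- eventual ratio bound
  obtain ⟨N, hN⟩ : ∃ N, ∀ n ≥ N, z (n + 1) / z n ≤ ρ := by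
    have := hlim.eventually (eventually_le_nhds hrρ)
    rw [eventually_atTop] at this
    exact this
  -- pointwise limit
  have hpt : ∀ j : ℕ, Tendsto (fun k => z (k + j) / z k) atTop (nhds (r ^ j)) := by
    intro j
    induction j with
    | zero => simpa using tendsto_const_nhds.congr (fun k => by
        simp [div_self (hz k).ne'])
    | succ j ih =>
        have h1 : Tendsto (fun k => z (k + j + 1) / z (k + j)) atTop (nhds r) := by
          have h2 := hlim.comp (tendsto_add_atTop_nat j)
          simpa [Function.comp_def] using h2
        have heq : ∀ k, (z (k + j + 1) / z (k + j)) * (z (k + j) / z k)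
            = z (k + (j + 1)) / z k := fun k =>
          div_mul_div_cancel₀ (hz (k + j)).ne'
        rw [pow_succ, mul_comm (r ^ j) r]
        exact ((h1.mul ih).congr heq)
  -- bound for k ≥ N
  have hbd : ∀ k ≥ N, ∀ j : ℕ, z (k + j) / z k ≤ ρ ^ j := by
    intro k hk j
    induction j with
    | zero => simp [div_self (hz k).ne']
    | succ j ih =>
        have h1 : z (k + j + 1) / z (k + j) ≤ ρ := hN (k + j) (le_trans hk (Nat.le_add_right _ _))
        have heq : (z (k + j + 1) / z (k + j)) * (z (k + j) / z k)
            = z (k + (j + 1)) / z k := div_mul_div_cancel₀ (hz (k + j)).ne'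
        rw [← heq, pow_succ, mul_comm (ρ^j) ρ]
        have hA : 0 ≤ z (k + j) / z k := le_of_lt (div_pos (hz _) (hz _))
        have hB : 0 < z (k + j + 1) / z (k + j) := div_pos (hz _) (hz _)
        exact mul_le_mul h1 ih hA hρ0.le
  -- apply Tannery
  have main : Tendsto (fun k => ∑' j, z j * (z (k + j) / z k)) atTop
      (nhds (∑' j, z j * r ^ j)) := by
    apply tendsto_tsum_of_dominated_convergence hgsum
    · intro j
      exact tendsto_const_nhds.mul (hpt j)
    · filter_upwards [eventually_ge_atTop N] with k hk j
      rw [Real.norm_eq_abs, abs_of_nonneg (mul_nonneg (hz j).le (div_nonneg (hz _).le (hz _).le))]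
      exact mul_le_mul_of_nonneg_left (hbd k hk j) (hz j).le
  refine main.congr (fun k => ?_)
  rw [← tsum_div_const]
  congr 1; ext j; rw [mul_div_assoc]
end

section
/- Let z : ℕ → ℝ be nonnegative with z(0) = 1, let r ∈ (0,1), suppose Σ_{j=0}^∞ z(j) r^{-j} < ∞ and s := Σ_{j=1}^∞ z(j) r^j < 1. Let P : ℕ → ℝ be positive with P(n) = Σ_{j=0}^∞ z(j) z(n+j) for all n, and suppose lim_{n→∞} P(n+1)/P(n) = r. Then liminf_{n→∞} z(n)/P(n) ≥ 1 − s > 0 and limsup_{n→∞} z(n)/P(n) ≤ 1. -/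
open Filter

set_option maxHeartbeats 1000000 in
theorem stmt7 (z P : ℕ → ℝ) (r : ℝ) (hr : r ∈ Set.Ioo (0 : ℝ) 1)
    (hz : ∀ n, 0 ≤ z n) (hz0 : z 0 = 1)
    (hsum : Summable (fun j => z j * (r⁻¹) ^ j))
    (hs : (∑' j, z (j + 1) * r ^ (j + 1)) < 1)
    (hP : ∀ n, 0 < P n)
    (hPdef : ∀ n, P n = ∑' j, z j * z (n + j))
    (hPlim : Filter.Tendsto (fun n => P (n + 1) / P n) Filter.atTop (nhds r)) :
    (1 - ∑' j, z (j + 1) * r ^ (j + 1)) ≤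
      Filter.liminf (fun n => z n / P n) Filter.atTop ∧
    0 < 1 - ∑' j, z (j + 1) * r ^ (j + 1) ∧
    Filter.limsup (fun n => z n / P n) Filter.atTop ≤ 1 := by
  obtain ⟨hr0, hr1⟩ := hr
  have hrinv : 1 ≤ r⁻¹ := (one_le_inv₀ hr0).2 hr1.le
  -- summability for any 0 ≤ q ≤ r⁻¹
  have hq_sum : ∀ q : ℝ, 0 ≤ q → q ≤ r⁻¹ → Summable (fun j => z j * q ^ j) := by
    intro q hq0 hq1
    refine Summable.of_nonneg_of_le (fun j => mul_nonneg (hz j) (pow_nonneg hq0 j))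
      (fun j => mul_le_mul_of_nonneg_left (pow_le_pow_left₀ hq0 hq1 j) (hz j)) hsum
  -- bound z m ≤ C * r ^ m
  obtain ⟨C, hC⟩ : ∃ C, ∀ j, z j * r⁻¹ ^ j ≤ C := by
    obtain ⟨C, hC⟩ := hsum.tendsto_atTop_zero.bddAbove_range
    exact ⟨C, fun j => hC (Set.mem_range_self j)⟩
  have hzC : ∀ m, z m ≤ C * r ^ m := by
    intro m
    have h := hC m
    have h2 : (0:ℝ) < r⁻¹ ^ m := by positivity
    calc z m = z m * r⁻¹ ^ m * r ^ m := by
          rw [mul_assoc, ← mul_pow, inv_mul_cancel₀ hr0.ne', one_pow, mul_one]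
      _ ≤ C * r ^ m := by
          exact mul_le_mul_of_nonneg_right h (by positivity)
  have hC0 : (1:ℝ) ≤ C := by simpa [hz0] using hC 0
  -- summability of the defining series
  have hS : ∀ n, Summable (fun j => z j * z (n + j)) := by
    intro n
    refine Summable.of_nonneg_of_le (fun j => mul_nonneg (hz j) (hz _))
      (fun j => ?_) (hsum.mul_left C)
    calc z j * z (n + j) ≤ z j * (C * r ^ (n + j)) :=
          mul_le_mul_of_nonneg_left (hzC _) (hz j)
      _ = C * r ^ n * (z j * r ^ j) := by rw [pow_add]; ring
      _ ≤ C * (z j * r⁻¹ ^ j) := by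
          have hC0' : (0:ℝ) ≤ C := le_trans zero_le_one hC0
          have h1 : r ^ n ≤ 1 := pow_le_one₀ hr0.le hr1.le
          have hx : 0 ≤ z j * r ^ j := mul_nonneg (hz j) (pow_nonneg hr0.le j)
          have h2 : z j * r ^ j ≤ z j * r⁻¹ ^ j :=
            mul_le_mul_of_nonneg_left
              (pow_le_pow_left₀ hr0.le (le_trans hr1.le hrinv) j) (hz j)
          have e1 : 0 ≤ C * (z j * r ^ j) * (1 - r ^ n) :=
            mul_nonneg (mul_nonneg hC0' hx) (by linarith)
          have e2 := mul_le_mul_of_nonneg_left h2 hC0'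
          nlinarith [e1, e2]
  -- z n ≤ P n
  have hzP : ∀ m, z m ≤ P m := by
    intro m
    have := Summable.le_tsum (hS m) 0 (fun j _ => mul_nonneg (hz j) (hz _))
    simpa [hz0, hPdef m] using this
  -- key estimate for any q with r < q ≤ r⁻¹
  have key : ∀ q : ℝ, r < q → q ≤ r⁻¹ →
      ∀ᶠ n in atTop, 1 - (∑' j, z (j + 1) * q ^ (j + 1)) ≤ z n / P n := by
    intro q hq hq1
    have hq0 : 0 < q := hr0.trans hq
    have hev : ∀ᶠ n in atTop, P (n + 1) / P n < q := hPlim.eventually_lt_const hq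
    obtain ⟨N, hN⟩ := eventually_atTop.1 hev
    have hstep : ∀ m ≥ N, P (m + 1) ≤ q * P m := by
      intro m hm
      have := (hN m hm).le
      calc P (m+1) = P (m+1) / P m * P m := (div_mul_cancel₀ _ (hP m).ne').symm
        _ ≤ q * P m := mul_le_mul_of_nonneg_right this (hP m).le
    have hiter : ∀ n ≥ N, ∀ j, P (n + j) ≤ q ^ j * P n := by
      intro n hn j
      induction j with
      | zero => simp
      | succ j ih =>
        calc P (n + (j+1)) = P ((n + j) + 1) := by ring_nf
          _ ≤ q * P (n + j) := hstep _ (le_trans hn (Nat.le_add_right n j))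
          _ ≤ q * (q ^ j * P n) := mul_le_mul_of_nonneg_left ih hq0.le
          _ = q ^ (j+1) * P n := by ring
    filter_upwards [eventually_ge_atTop N] with n hn
    have hsum1 : Summable (fun j => z (j + 1) * z (n + (j + 1))) := by
      have := (summable_nat_add_iff 1).2 (hS n)
      exact this
    have hsum2 : Summable (fun j => z (j + 1) * q ^ (j + 1) * P n) := by
      exact (((summable_nat_add_iff 1).2 (hq_sum q hq0.le hq1)).mul_right (P n))
    have hPn : P n = z n + ∑' j, z (j + 1) * z (n + (j + 1)) := by
      rw [hPdef n, Summable.tsum_eq_zero_add (hS n)]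
      simp [hz0]
    have hle : (∑' j, z (j + 1) * z (n + (j + 1))) ≤
        (∑' j, z (j + 1) * q ^ (j + 1)) * P n := by
      rw [← tsum_mul_right]
      refine Summable.tsum_le_tsum (fun j => ?_) hsum1 hsum2
      calc z (j+1) * z (n + (j+1)) ≤ z (j+1) * P (n + (j+1)) :=
            mul_le_mul_of_nonneg_left (hzP _) (hz _)
        _ ≤ z (j+1) * (q ^ (j+1) * P n) :=
            mul_le_mul_of_nonneg_left (hiter n hn (j+1)) (hz _)
        _ = z (j+1) * q ^ (j+1) * P n := by ring
    rw [le_div_iff₀ (hP n)]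
    nlinarith [hzP n]
  -- the q_k sequence tending to r
  set s := ∑' j, z (j + 1) * r ^ (j + 1) with hs_def
  have hbdd_above : ∀ n, z n / P n ≤ 1 := fun n =>
    (div_le_one (hP n)).2 (hzP n)
  have hbdd_below : ∀ n, 0 ≤ z n / P n := fun n => div_nonneg (hz n) (hP n).le
  constructor
  · -- liminf lower bound
    set q : ℕ → ℝ := fun k => r + (r⁻¹ - r) / (k + 1) with hq_def
    have hqr : ∀ k, r < q k := by
      intro k
      have : 0 < (r⁻¹ - r) / (k + 1 : ℝ) := by
        apply div_pos (by linarith [hr1.trans_le hrinv]) (by positivity)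
      simp [hq_def]; linarith
    have hq1 : ∀ k, q k ≤ r⁻¹ := by
      intro k
      have h1 : (r⁻¹ - r) / (k + 1 : ℝ) ≤ (r⁻¹ - r) / 1 := by
        apply div_le_div_of_nonneg_left (by linarith [hr1.trans_le hrinv]) one_pos
        push_cast; linarith [Nat.cast_nonneg (α := ℝ) k]
      simp [hq_def]; linarith
    have hqlim : Tendsto q atTop (nhds r) := by
      have h0 : Tendsto (fun k : ℕ => (r⁻¹ - r) / ((k:ℝ) + 1)) atTop (nhds 0) := by
        have h1 := tendsto_one_div_add_atTop_nhds_zero_nat.const_mul (r⁻¹ - r)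
        simpa [div_eq_mul_inv] using h1
      have h2 := (tendsto_const_nhds : Tendsto (fun _ : ℕ => r) atTop (nhds r)).add h0
      simpa [hq_def] using h2
    have hSk_lim : Tendsto (fun k => ∑' j, z (j + 1) * q k ^ (j + 1)) atTop (nhds s) := by
      apply tendsto_tsum_of_dominated_convergence
        (bound := fun j => z (j + 1) * r⁻¹ ^ (j + 1))
      · exact (summable_nat_add_iff 1).2 hsum
      · intro j
        exact (tendsto_const_nhds.mul ((hqlim.pow (j+1))))
      · filter_upwards with k j
        rw [Real.norm_eq_abs, abs_of_nonneg
          (mul_nonneg (hz _) (pow_nonneg (hr0.trans (hqr k)).le _))]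
        exact mul_le_mul_of_nonneg_left
          (pow_le_pow_left₀ (hr0.trans (hqr k)).le (hq1 k) _) (hz _)
    -- liminf ≥ 1 - S k for each k, then limit
    have hlb : ∀ k, 1 - (∑' j, z (j + 1) * q k ^ (j + 1)) ≤
        liminf (fun n => z n / P n) atTop := by
      intro k
      apply le_liminf_of_le
      · exact (isBoundedUnder_of ⟨1, hbdd_above⟩).isCoboundedUnder_ge
      · exact (key (q k) (hqr k) (hq1 k)).mono fun n h => h
    have : Tendsto (fun k => 1 - (∑' j, z (j + 1) * q k ^ (j + 1))) atTop (nhds (1 - s)) :=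
      tendsto_const_nhds.sub hSk_lim
    exact le_of_tendsto this (Eventually.of_forall hlb)
  refine ⟨by linarith, ?_⟩
  apply limsup_le_of_le
  · exact (isBoundedUnder_of ⟨0, hbdd_below⟩).isCoboundedUnder_le
  · exact Eventually.of_forall hbdd_above
end

section
/- Let b : ℕ → ℝ be nonnegative with b(0)=0, λ₁ > 0, and let z solve z(0)=1, z(n) = λ₁ Σ_{j=0}^{n-1} b(n-j) z(j). Suppose λ₁ Σ_{j=1}^∞ b(j) < 1 (so z(n) → 0). Then there exist C₁ > 0 and α₁ ∈ (0,1) with b(k) ≤ C₁ α₁^k for all k ≥ 1 if and only if there exist C₄ > 0 and α₄ ∈ (0,1) with z(k) ≤ C₄ α₄^k for all k ≥ 0. -/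
open Finset Filter Set Topology

theorem stmt11 (b z : ℕ → ℝ) (lam : ℝ) (hb : ∀ n, 0 ≤ b n) (hb0 : b 0 = 0)
    (hlam : 0 < lam) (hz0 : z 0 = 1)
    (hz : ∀ n, 1 ≤ n → z n = lam * ∑ j ∈ Finset.range n, b (n - j) * z j)
    (hbsum : Summable b) (hlt : lam * ∑' j, b j < 1) :
    (∃ C₁ > (0 : ℝ), ∃ α₁ ∈ Set.Ioo (0 : ℝ) 1, ∀ k, 1 ≤ k → b k ≤ C₁ * α₁ ^ k) ↔
    (∃ C₄ > (0 : ℝ), ∃ α₄ ∈ Set.Ioo (0 : ℝ) 1, ∀ k, z k ≤ C₄ * α₄ ^ k) := by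
  have hznn : ∀ n, 0 ≤ z n := by
    intro n
    induction n using Nat.strong_induction_on with
    | _ n ih =>
      rcases Nat.eq_zero_or_pos n with h0 | h1
      · simp [h0, hz0]
      · rw [hz n h1]
        exact mul_nonneg hlam.le <| Finset.sum_nonneg fun j hj =>
          mul_nonneg (hb _) (ih j (Finset.mem_range.mp hj))
  constructor
  · rintro ⟨C₁, hC₁, α₁, ⟨hα₁0, hα₁1⟩, hb1⟩
    set S := ∑' j, b j with hS
    have hS0 : 0 ≤ S := tsum_nonneg hb
    set ε := (1 - lam * S) / 2 with hε
    have hε0 : 0 < ε := by simp only [hε]; linarith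
    set β := (1 + α₁) / 2 with hβ
    have hβ0 : 0 < β := by simp only [hβ]; linarith
    have hβ1 : β < 1 := by simp only [hβ]; linarith
    have hαβ : α₁ < β := by simp only [hβ]; linarith
    have hR₀ : 1 < β / α₁ := (one_lt_div hα₁0).2 hαβ
    have h1β : (0:ℝ) < 1 - β := by linarith
    have hpos2 : (0:ℝ) < 2 * lam * C₁ := by positivity
    obtain ⟨N, hN⟩ := exists_pow_lt_of_lt_one
      (show (0:ℝ) < ε * (1 - β) / (2 * lam * C₁) from div_pos (mul_pos hε0 h1β) hpos2) hβ1
    -- tail bound for the constant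
    have htail : lam * (C₁ * (β ^ (N + 1) / (1 - β))) < ε / 2 := by
      have h1 : β ^ (N + 1) ≤ β ^ N := pow_le_pow_of_le_one hβ0.le hβ1.le (Nat.le_succ N)
      have h2 : β ^ N * (2 * lam * C₁) < ε * (1 - β) := (lt_div_iff₀ hpos2).mp hN
      have h4 : β ^ (N + 1) * (2 * lam * C₁) ≤ β ^ N * (2 * lam * C₁) :=
        mul_le_mul_of_nonneg_right h1 hpos2.le
      have heq : lam * (C₁ * (β ^ (N + 1) / (1 - β)))
          = β ^ (N + 1) * (2 * lam * C₁) / (2 * (1 - β)) := by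
        field_simp
      rw [heq, div_lt_iff₀ (by linarith : (0:ℝ) < 2 * (1 - β))]
      nlinarith
    set P : ℝ → ℝ := fun R => ∑ k ∈ Finset.range (N + 1), b k * R ^ k with hP
    have hP1 : P 1 ≤ S := by
      simp only [hP, one_pow, mul_one]
      exact Summable.sum_le_tsum _ (fun k _ => hb k) hbsum
    have hPc : ContinuousAt (fun R => lam * P R) 1 := by
      apply ContinuousAt.mul continuousAt_const
      exact (continuous_finset_sum _ fun k _ =>
        (continuous_const.mul (continuous_pow k))).continuousAt
    have hev1 : ∀ᶠ R in 𝓝 (1:ℝ), lam * P R < lam * P 1 + ε / 2 := by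
      have : Set.Iio (lam * P 1 + ε / 2) ∈ 𝓝 (lam * P 1) :=
        Iio_mem_nhds (by linarith)
      exact hPc this
    have hev2 : ∀ᶠ R in 𝓝[>] (1:ℝ), R ∈ Set.Ioo (1:ℝ) (β / α₁) :=
      eventually_of_mem (Ioo_mem_nhdsGT hR₀) fun x hx => hx
    obtain ⟨R, hRlt, hR1, hRR₀⟩ := ((hev1.filter_mono nhdsWithin_le_nhds).and hev2).exists
    have hR0 : (0:ℝ) < R := by linarith
    have hαR : α₁ * R ≤ β := by
      rw [lt_div_iff₀ hα₁0] at hRR₀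
      linarith [mul_comm R α₁]
    -- key finite sum bound
    have key : ∀ n, lam * ∑ k ∈ Finset.range (n + 1), b k * R ^ k ≤ 1 := by
      intro n
      set M := max n N with hM
      have hnM : n + 1 ≤ M + 1 := by omega
      have hNM : N + 1 ≤ M + 1 := by omega
      have step1 : ∑ k ∈ Finset.range (n + 1), b k * R ^ k
          ≤ ∑ k ∈ Finset.range (M + 1), b k * R ^ k :=
        Finset.sum_le_sum_of_subset_of_nonneg (Finset.range_subset_range.2 hnM)
          (fun k _ _ => mul_nonneg (hb k) (pow_nonneg hR0.le k))
      have split : ∑ k ∈ Finset.range (M + 1), b k * R ^ k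
          = P R + ∑ k ∈ Finset.Ico (N + 1) (M + 1), b k * R ^ k :=
        (Finset.sum_range_add_sum_Ico _ hNM).symm
      have ico_bound : ∑ k ∈ Finset.Ico (N + 1) (M + 1), b k * R ^ k
          ≤ C₁ * (β ^ (N + 1) / (1 - β)) := by
        have h1 : ∑ k ∈ Finset.Ico (N + 1) (M + 1), b k * R ^ k
            ≤ ∑ k ∈ Finset.Ico (N + 1) (M + 1), C₁ * β ^ k := by
          apply Finset.sum_le_sum
          intro k hk
          have hk1 : 1 ≤ k := le_trans (Nat.le_add_left 1 N) (Finset.mem_Ico.mp hk).1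
          calc b k * R ^ k ≤ C₁ * α₁ ^ k * R ^ k :=
                mul_le_mul_of_nonneg_right (hb1 k hk1) (pow_nonneg hR0.le k)
            _ = C₁ * (α₁ * R) ^ k := by ring
            _ ≤ C₁ * β ^ k := by
                apply mul_le_mul_of_nonneg_left _ hC₁.le
                exact pow_le_pow_left₀ (mul_nonneg hα₁0.le hR0.le) hαR k
        have h2 : ∑ k ∈ Finset.Ico (N + 1) (M + 1), C₁ * β ^ k
            = C₁ * β ^ (N + 1) * ∑ i ∈ Finset.range (M + 1 - (N + 1)), β ^ i := by
          rw [Finset.sum_Ico_eq_sum_range, Finset.mul_sum]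
          apply Finset.sum_congr rfl
          intro i _
          rw [pow_add]; ring
        have h3 : ∑ i ∈ Finset.range (M + 1 - (N + 1)), β ^ i ≤ 1 / (1 - β) := by
          have := Summable.sum_le_tsum (Finset.range (M + 1 - (N + 1)))
            (fun i _ => pow_nonneg hβ0.le i) (summable_geometric_of_lt_one hβ0.le hβ1)
          rw [tsum_geometric_of_lt_one hβ0.le hβ1] at this
          simpa [one_div] using this
        calc ∑ k ∈ Finset.Ico (N + 1) (M + 1), b k * R ^ k
            ≤ C₁ * β ^ (N + 1) * ∑ i ∈ Finset.range (M + 1 - (N + 1)), β ^ i := by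
              rw [← h2]; exact h1
          _ ≤ C₁ * β ^ (N + 1) * (1 / (1 - β)) :=
              mul_le_mul_of_nonneg_left h3 (mul_nonneg hC₁.le (pow_nonneg hβ0.le _))
          _ = C₁ * (β ^ (N + 1) / (1 - β)) := by ring
      apply le_of_lt
      calc lam * ∑ k ∈ Finset.range (n + 1), b k * R ^ k
          ≤ lam * (P R + ∑ k ∈ Finset.Ico (N + 1) (M + 1), b k * R ^ k) := by
            apply mul_le_mul_of_nonneg_left _ hlam.le
            rw [← split]; exact step1
        _ = lam * P R + lam * ∑ k ∈ Finset.Ico (N + 1) (M + 1), b k * R ^ k := by ring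
        _ ≤ lam * P R + lam * (C₁ * (β ^ (N + 1) / (1 - β))) := by
            have := mul_le_mul_of_nonneg_left ico_bound hlam.le
            linarith
        _ < (lam * P 1 + ε / 2) + ε / 2 := by linarith
        _ ≤ lam * S + ε := by
            have := mul_le_mul_of_nonneg_left hP1 hlam.le
            linarith
        _ ≤ 1 := by simp only [hε]; linarith
    set ρ := R⁻¹ with hρ
    have hρ0 : 0 < ρ := inv_pos.2 hR0
    have hρ1 : ρ < 1 := by
      rw [hρ, inv_lt_one_iff₀]; right; exact hR1
    have main : ∀ n, z n ≤ ρ ^ n := by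
      intro n
      induction n using Nat.strong_induction_on with
      | _ n ih =>
        match n with
        | 0 => simp [hz0]
        | Nat.succ m =>
          rw [hz (m + 1) (Nat.le_add_left 1 m)]
          have step1 : ∑ j ∈ Finset.range (m + 1), b (m + 1 - j) * z j
              ≤ ∑ j ∈ Finset.range (m + 1), b (m + 1 - j) * ρ ^ j := by
            apply Finset.sum_le_sum
            intro j hj
            exact mul_le_mul_of_nonneg_left (ih j (Finset.mem_range.mp hj)) (hb _)
          have reindex : ∑ j ∈ Finset.range (m + 1), b (m + 1 - j) * ρ ^ j
              = ρ ^ (m + 1) * ∑ k ∈ Finset.range (m + 2), b k * R ^ k := by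
            have hterm : ∀ j, j < m + 1 →
                b (m + 1 - j) * ρ ^ j
                  = ρ ^ (m + 1) * (b (m + 1 - j) * R ^ (m + 1 - j)) := by
              intro j hj
              have hle : j ≤ m + 1 := Nat.le_of_lt_succ (Nat.lt_succ_of_lt hj)
              have hcancel : ρ ^ (m + 1 - j) * R ^ (m + 1 - j) = 1 := by
                rw [← mul_pow, hρ, inv_mul_cancel₀ (ne_of_gt hR0), one_pow]
              have hsplit : ρ ^ (m + 1) = ρ ^ j * ρ ^ (m + 1 - j) := by
                rw [← pow_add, Nat.add_sub_cancel' hle]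
              have : ρ ^ j = ρ ^ (m + 1) * R ^ (m + 1 - j) := by
                rw [hsplit, mul_assoc, hcancel, mul_one]
              rw [this]; ring
            rw [Finset.sum_congr rfl fun j hj => hterm j (Finset.mem_range.mp hj),
              ← Finset.mul_sum]
            congr 1
            have h2 : ∑ k ∈ Finset.range (m + 2), b k * R ^ k
                = ∑ i ∈ Finset.range (m + 1), b (i + 1) * R ^ (i + 1) := by
              rw [Finset.sum_range_succ' (fun k => b k * R ^ k) (m + 1)]
              simp [hb0]
            rw [h2, ← Finset.sum_range_reflect (fun i => b (i + 1) * R ^ (i + 1)) (m + 1)]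
            apply Finset.sum_congr rfl
            intro j hj
            have hj' : j < m + 1 := Finset.mem_range.mp hj
            have harg : m + 1 - 1 - j + 1 = m + 1 - j := by omega
            rw [harg]
          calc lam * ∑ j ∈ Finset.range (m + 1), b (m + 1 - j) * z j
              ≤ lam * ∑ j ∈ Finset.range (m + 1), b (m + 1 - j) * ρ ^ j :=
                mul_le_mul_of_nonneg_left step1 hlam.le
            _ = ρ ^ (m + 1) * (lam * ∑ k ∈ Finset.range (m + 2), b k * R ^ k) := by
                rw [reindex]; ring
            _ ≤ ρ ^ (m + 1) * 1 :=
                mul_le_mul_of_nonneg_left (key (m + 1)) (pow_nonneg hρ0.le _)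
            _ = ρ ^ (m + 1) := mul_one _
    exact ⟨1, one_pos, ρ, ⟨hρ0, hρ1⟩, fun k => by simpa using main k⟩
  · rintro ⟨C₄, hC₄, α₄, hα₄, hz4⟩
    refine ⟨C₄ / lam, div_pos hC₄ hlam, α₄, hα₄, fun k hk => ?_⟩
    have hsingle : b k * z 0 ≤ ∑ j ∈ Finset.range k, b (k - j) * z j := by
      have h0 : (0 : ℕ) ∈ Finset.range k := Finset.mem_range.mpr hk
      have := Finset.single_le_sum (f := fun j => b (k - j) * z j)
        (fun j _ => mul_nonneg (hb _) (hznn j)) h0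
      simpa using this
    have : lam * b k ≤ z k := by
      rw [hz k hk]
      have := mul_le_mul_of_nonneg_left hsingle hlam.le
      rw [hz0, mul_one] at this
      exact this
    have h2 : lam * b k ≤ C₄ * α₄ ^ k := le_trans this (hz4 k)
    rw [div_mul_eq_mul_div, le_div_iff₀ hlam]
    linarith
end

section
/- Let x : ℕ → ℝ solve the linear convolution equation x(n+1) = f(n) + Σ_{i=0}^n F(n-i) x(i), x(0) = x₀, where F, f : ℕ → ℝ, r > 0, Σ_{i=0}^∞ r^{-(i+1)} |F(i)| < 1, Σ_{l=0}^∞ r^{-l} |f(l)| < ∞, and Σ_{j=0}^∞ r^{-j} |x(j)| < ∞. Then Σ_{j=0}^∞ r^{-j} x(j) = (r − Σ_{k=0}^∞ r^{-k} F(k))^{-1} (r x₀ + Σ_{l=0}^∞ r^{-l} f(l)). -/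
theorem stmt14 (x f F : ℕ → ℝ) (x₀ r : ℝ) (hr : 0 < r)
    (hx0 : x 0 = x₀)
    (hx : ∀ n, x (n + 1) = f n + ∑ i ∈ Finset.range (n + 1), F (n - i) * x i)
    (hF : Summable (fun i => (r⁻¹) ^ (i + 1) * |F i|))
    (hFlt : (∑' i, (r⁻¹) ^ (i + 1) * |F i|) < 1)
    (hf : Summable (fun l => (r⁻¹) ^ l * |f l|))
    (hxsum : Summable (fun j => (r⁻¹) ^ j * |x j|)) :
    ∑' j, (r⁻¹) ^ j * x j =
      (r - ∑' k, (r⁻¹) ^ k * F k)⁻¹ * (r * x₀ + ∑' l, (r⁻¹) ^ l * f l) := by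
  have hrinv : (0:ℝ) < r⁻¹ := inv_pos.mpr hr
  have hnormF : ∀ k, ‖(r⁻¹) ^ (k+1) * F k‖ = (r⁻¹) ^ (k+1) * |F k| := by
    intro k
    rw [Real.norm_eq_abs, abs_mul, abs_pow, abs_of_pos hrinv]
  have hnormx : ∀ j, ‖(r⁻¹) ^ j * x j‖ = (r⁻¹) ^ j * |x j| := by
    intro j
    rw [Real.norm_eq_abs, abs_mul, abs_pow, abs_of_pos hrinv]
  have hnormf : ∀ l, ‖(r⁻¹) ^ l * f l‖ = (r⁻¹) ^ l * |f l| := by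
    intro l
    rw [Real.norm_eq_abs, abs_mul, abs_pow, abs_of_pos hrinv]
  have hFn : Summable (fun k => ‖(r⁻¹) ^ (k+1) * F k‖) := by
    simpa only [hnormF] using hF
  have hxn : Summable (fun j => ‖(r⁻¹) ^ j * x j‖) := by
    simpa only [hnormx] using hxsum
  have hfn : Summable (fun l => ‖(r⁻¹) ^ l * f l‖) := by
    simpa only [hnormf] using hf
  have hFs : Summable (fun k => (r⁻¹) ^ (k+1) * F k) := hFn.of_norm
  have hxs : Summable (fun j => (r⁻¹) ^ j * x j) := hxn.of_norm
  have hfs : Summable (fun l => (r⁻¹) ^ l * f l) := hfn.of_norm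
  set X := ∑' j, (r⁻¹) ^ j * x j with hX
  set A := ∑' k, (r⁻¹) ^ (k+1) * F k with hA
  set Φ := ∑' k, (r⁻¹) ^ k * F k with hΦ
  set C := ∑' l, (r⁻¹) ^ l * f l with hC
  -- Cauchy product inner sum identity
  have hconv : ∀ n, ∑ k ∈ Finset.range (n+1),
      ((r⁻¹) ^ (k+1) * F k) * ((r⁻¹) ^ (n-k) * x (n-k)) =
      (r⁻¹) ^ (n+1) * ∑ i ∈ Finset.range (n+1), F (n - i) * x i := by
    intro n
    rw [Finset.mul_sum, ← Finset.sum_range_reflect]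
    apply Finset.sum_congr rfl
    intro k hk
    have hk' : k ≤ n := Nat.lt_succ_iff.mp (Finset.mem_range.mp hk)
    simp only [Nat.add_sub_cancel]
    have h1 : n - (n - k) = k := Nat.sub_sub_self hk'
    rw [h1]
    have h2 : (r⁻¹) ^ (n - k + 1) * (r⁻¹) ^ k = (r⁻¹) ^ (n+1) := by
      rw [← pow_add]; congr 1; omega
    calc ((r⁻¹) ^ (n - k + 1) * F (n - k)) * ((r⁻¹) ^ k * x k)
        = ((r⁻¹) ^ (n - k + 1) * (r⁻¹) ^ k) * (F (n - k) * x k) := by ring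
      _ = (r⁻¹) ^ (n+1) * (F (n - k) * x k) := by rw [h2]
  have key : A * X = ∑' n, (r⁻¹) ^ (n+1) * ∑ i ∈ Finset.range (n+1), F (n - i) * x i := by
    rw [hA, hX, tsum_mul_tsum_eq_tsum_sum_range_of_summable_norm hFn hxn]
    exact tsum_congr hconv
  -- summability of the convolution term
  have hconvS : Summable (fun n => (r⁻¹) ^ (n+1) * ∑ i ∈ Finset.range (n+1), F (n - i) * x i) := by
    have := (summable_norm_sum_mul_range_of_summable_norm hFn hxn).of_norm
    simpa only [hconv] using this
  have hfs' : Summable (fun n => (r⁻¹) ^ (n+1) * f n) := by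
    have := hfs.mul_left r⁻¹
    simpa only [pow_succ, mul_assoc, mul_comm, mul_left_comm] using this
  -- shift identity
  have hshift : X = x 0 + ∑' n, (r⁻¹) ^ (n+1) * x (n+1) := by
    rw [hX, Summable.tsum_eq_zero_add hxs, pow_zero, one_mul]
  have hxsplit : ∑' n, (r⁻¹) ^ (n+1) * x (n+1)
      = (∑' n, (r⁻¹) ^ (n+1) * f n)
        + ∑' n, (r⁻¹) ^ (n+1) * ∑ i ∈ Finset.range (n+1), F (n - i) * x i := by
    rw [← Summable.tsum_add hfs' hconvS]
    apply tsum_congr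
    intro n
    rw [hx n, mul_add]
  have hCsum : ∑' n, (r⁻¹) ^ (n+1) * f n = r⁻¹ * C := by
    rw [hC, ← tsum_mul_left]
    apply tsum_congr
    intro n
    rw [pow_succ]; ring
  -- main linear equation
  have main : X = x₀ + r⁻¹ * C + A * X := by
    rw [hxsplit, hCsum, ← key, hx0] at hshift
    linarith [hshift]
  -- |A| < 1
  have hAlt : |A| < 1 := by
    have h1 : ‖A‖ ≤ ∑' k, ‖(r⁻¹) ^ (k+1) * F k‖ := norm_tsum_le_tsum_norm hFn
    have h2 : (∑' k, ‖(r⁻¹) ^ (k+1) * F k‖) = ∑' k, (r⁻¹) ^ (k+1) * |F k| :=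
      tsum_congr hnormF
    rw [Real.norm_eq_abs] at h1
    exact lt_of_le_of_lt (h2 ▸ h1) hFlt
  have hA1 : A ≠ 1 := by
    intro h; rw [h] at hAlt; simp at hAlt
  -- Φ = r * A
  have hΦA : Φ = r * A := by
    rw [hΦ, hA, ← tsum_mul_left]
    apply tsum_congr
    intro k
    rw [pow_succ]
    field_simp
  have hrne : r ≠ 0 := ne_of_gt hr
  have hden : r - Φ ≠ 0 := by
    rw [hΦA]
    intro h
    apply hA1
    have : r * (1 - A) = 0 := by ring_nf; linarith [h]
    rcases mul_eq_zero.mp this with h' | h'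
    · exact absurd h' hrne
    · linarith
  -- solve
  rw [hΦA] at hden ⊢
  have h1A : (1 : ℝ) - A ≠ 0 := sub_ne_zero.mpr (Ne.symm hA1)
  rw [inv_mul_eq_div, eq_div_iff hden]
  have h2 : X * (1 - A) = x₀ + r⁻¹ * C := by rw [mul_sub]; linarith [main]
  calc X * (r - r * A) = r * (X * (1 - A)) := by ring
    _ = r * (x₀ + r⁻¹ * C) := by rw [h2]
    _ = r * x₀ + C := by field_simp
end

section
/- Let H : ℕ × ℕ → ℝ with H(n,i) = 0 for i > n, and suppose there exist integers 0 < M < N such that sup_{n ≥ N} Σ_{i=M}^n |H(n,i)| < 1 and sup_{n ≥ M} Σ_{i=0}^M |H(n,i)| < ∞. Then there exists K > 0, independent of z₀, such that every solution of z(n+1) = Σ_{i=0}^n H(n,i) z(i) with z(0) = z₀ satisfies |z(n)| ≤ K |z₀| for all n ≥ 0. -/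
theorem stmt17 (H : ℕ → ℕ → ℝ) (hH : ∀ n i, n < i → H n i = 0)
    (M N : ℕ) (hM : 0 < M) (hMN : M < N)
    (h1 : ∃ c < (1 : ℝ), ∀ n, N ≤ n → ∑ i ∈ Finset.Icc M n, |H n i| ≤ c)
    (h2 : ∃ C : ℝ, ∀ n, M ≤ n → ∑ i ∈ Finset.Icc 0 M, |H n i| ≤ C) :
    ∃ K > (0 : ℝ), ∀ z : ℕ → ℝ,
      (∀ n, z (n + 1) = ∑ i ∈ Finset.range (n + 1), H n i * z i) →
      ∀ n, |z n| ≤ K * |z 0| := by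
  obtain ⟨c, hc1, hc⟩ := h1
  obtain ⟨C, hC⟩ := h2
  have hc0 : 0 ≤ c := le_trans (Finset.sum_nonneg fun i _ => abs_nonneg _) (hc N le_rfl)
  have hC0 : 0 ≤ C := le_trans (Finset.sum_nonneg fun i _ => abs_nonneg _) (hC M le_rfl)
  set G : ℕ → ℝ := fun n => ∑ i ∈ Finset.range (n + 1), |H n i| with hGdef
  set Q : ℕ → ℝ := fun n => ∏ m ∈ Finset.range n, max 1 (G m) with hQdef
  have hQ1 : ∀ n, 1 ≤ Q n := by
    intro n
    induction n with
    | zero => simp [hQdef]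
    | succ k ihk =>
      have h := le_max_left (1 : ℝ) (G k)
      simp only [hQdef, Finset.prod_range_succ] at *
      nlinarith
  have hQmono : Monotone Q := monotone_nat_of_le_succ fun n => by
    have h := hQ1 n
    have h2 : (1 : ℝ) ≤ max 1 (G n) := le_max_left _ _
    simp only [hQdef, Finset.prod_range_succ]
    nlinarith
  set P := Q N with hP
  have hc1' : 0 < 1 - c := by linarith
  set K := P * (1 + C / (1 - c)) with hK
  have hP1 : 1 ≤ P := hQ1 N
  have hdiv : 0 ≤ C / (1 - c) := div_nonneg hC0 hc1'.le
  have hK1 : 1 ≤ K := by nlinarith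
  have hKey : C * P + c * K ≤ K := by
    have h : (1 - c) * K = (1 - c) * P + C * P := by
      rw [hK]; field_simp
    nlinarith
  refine ⟨K, by linarith, fun z hz => ?_⟩
  have hz0 : (0 : ℝ) ≤ |z 0| := abs_nonneg _
  have key : ∀ n, |z n| ≤ Q n * |z 0| := by
    intro n
    induction n using Nat.strong_induction_on with
    | _ n ih =>
      match n with
      | 0 => simpa [hQdef] using le_mul_of_one_le_left hz0 (hQ1 0)
      | Nat.succ m =>
        rw [hz m]
        have hQm0 : (0 : ℝ) ≤ Q m * |z 0| := by nlinarith [hQ1 m]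
        calc |∑ i ∈ Finset.range (m + 1), H m i * z i|
            ≤ ∑ i ∈ Finset.range (m + 1), |H m i| * |z i| := by
              simpa [abs_mul] using Finset.abs_sum_le_sum_abs (fun i => H m i * z i) _
          _ ≤ ∑ i ∈ Finset.range (m + 1), |H m i| * (Q m * |z 0|) := by
              refine Finset.sum_le_sum fun i hi => ?_
              refine mul_le_mul_of_nonneg_left ?_ (abs_nonneg _)
              exact le_trans (ih i (Finset.mem_range.mp hi))
                (mul_le_mul_of_nonneg_right
                  (hQmono (Nat.le_of_lt_succ (Finset.mem_range.mp hi))) hz0)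
          _ = G m * (Q m * |z 0|) := by rw [← Finset.sum_mul]
          _ ≤ max 1 (G m) * (Q m * |z 0|) :=
              mul_le_mul_of_nonneg_right (le_max_right _ _) hQm0
          _ = Q (m + 1) * |z 0| := by
              simp only [hQdef, Finset.prod_range_succ]; ring
  intro n
  induction n using Nat.strong_induction_on with
  | _ n ih =>
    rcases le_or_gt n N with hn | hn
    · refine le_trans (key n) ?_
      have h2 : Q n * |z 0| ≤ P * |z 0| := mul_le_mul_of_nonneg_right (hQmono hn) hz0
      have h3 : P * |z 0| ≤ K * |z 0| := by
        refine mul_le_mul_of_nonneg_right ?_ hz0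
        nlinarith
      linarith
    · obtain ⟨m, rfl⟩ : ∃ m, n = m + 1 := ⟨n - 1, by omega⟩
      have hmN : N ≤ m := by omega
      have hmM : M ≤ m := by omega
      rw [hz m]
      have split : ∑ i ∈ Finset.range (m + 1), |H m i| * |z i|
          = ∑ i ∈ Finset.Ico 0 M, |H m i| * |z i|
            + ∑ i ∈ Finset.Ico M (m + 1), |H m i| * |z i| := by
        rw [Finset.range_eq_Ico, ← Finset.sum_Ico_consecutive _ (Nat.zero_le M) (by omega)]
      have hPz : (0 : ℝ) ≤ P * |z 0| := by nlinarith
      have hKz : (0 : ℝ) ≤ K * |z 0| := by nlinarith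
      have b1 : ∑ i ∈ Finset.Ico 0 M, |H m i| * |z i| ≤ C * (P * |z 0|) := by
        calc ∑ i ∈ Finset.Ico 0 M, |H m i| * |z i|
            ≤ ∑ i ∈ Finset.Ico 0 M, |H m i| * (P * |z 0|) := by
              refine Finset.sum_le_sum fun i hi => ?_
              refine mul_le_mul_of_nonneg_left ?_ (abs_nonneg _)
              have hi' : i ≤ N := by
                have := (Finset.mem_Ico.mp hi).2; omega
              exact le_trans (key i)
                (mul_le_mul_of_nonneg_right (hQmono hi') hz0)
          _ = (∑ i ∈ Finset.Ico 0 M, |H m i|) * (P * |z 0|) := by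
              rw [← Finset.sum_mul]
          _ ≤ C * (P * |z 0|) := by
              refine mul_le_mul_of_nonneg_right ?_ hPz
              refine le_trans (Finset.sum_le_sum_of_subset_of_nonneg ?_
                (fun i _ _ => abs_nonneg _)) (hC m hmM)
              intro i hi
              simp only [Finset.mem_Ico, Finset.mem_Icc] at *
              omega
      have b2 : ∑ i ∈ Finset.Ico M (m + 1), |H m i| * |z i| ≤ c * (K * |z 0|) := by
        calc ∑ i ∈ Finset.Ico M (m + 1), |H m i| * |z i|
            ≤ ∑ i ∈ Finset.Ico M (m + 1), |H m i| * (K * |z 0|) := by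
              refine Finset.sum_le_sum fun i hi => ?_
              refine mul_le_mul_of_nonneg_left ?_ (abs_nonneg _)
              exact ih i (Finset.mem_Ico.mp hi).2
          _ = (∑ i ∈ Finset.Ico M (m + 1), |H m i|) * (K * |z 0|) := by
              rw [← Finset.sum_mul]
          _ ≤ c * (K * |z 0|) := by
              refine mul_le_mul_of_nonneg_right ?_ hKz
              have : Finset.Ico M (m + 1) = Finset.Icc M m := by
                rw [Finset.Ico_add_one_right_eq_Icc]
              rw [this]
              exact hc m hmN
      calc |∑ i ∈ Finset.range (m + 1), H m i * z i|
          ≤ ∑ i ∈ Finset.range (m + 1), |H m i| * |z i| := by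
            simpa [abs_mul] using Finset.abs_sum_le_sum_abs (fun i => H m i * z i) _
        _ ≤ C * (P * |z 0|) + c * (K * |z 0|) := by rw [split]; exact add_le_add b1 b2
        _ ≤ K * |z 0| := by nlinarith [mul_le_mul_of_nonneg_right hKey hz0]
end
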